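/- Let C be a triangulated category and 𝒳 an extension-closed full additive subcategory closed under isomorphisms. Suppose g: C → X^C is a left minimal left 𝒳-approximation of an object C, and complete g to a distinguished triangle Σ⁻¹X^C → W → C → X^C (equivalently, W → C → X^C → ΣW is distinguished). Then Hom(W, X') = 0 for every X' ∈ 𝒳. Consequently, if every object of C admits a left minimal left 𝒳-approximation, then (^⊥𝒳, 𝒳) is a torsion pair in C. -/

import Mathlib

open CategoryTheory Category Limits Pretriangulated ZeroObject

variable {C : Type*} [Category C] [Preadditive C] [HasZeroObject C]
  [HasShift C ℤ] [∀ n : ℤ, (shiftFunctor C n).Additive] [Pretriangulated C]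
  [IsTriangulated C] [HasBinaryBiproducts C]

/-- `f : A ⟶ B` is a left `X`-approximation of `A`. -/
def IsLeftApprox (X : Set C) {A B : C} (f : A ⟶ B) : Prop :=
  B ∈ X ∧ ∀ B' : C, B' ∈ X → ∀ g : A ⟶ B', ∃ h : B ⟶ B', f ≫ h = g

/-- `X` is extension closed. -/
def ExtensionClosed (X : Set C) : Prop :=
  ∀ ⦃A B Z : C⦄ (f : A ⟶ B) (g : B ⟶ Z) (h : Z ⟶ A⟦(1 : ℤ)⟧),
    (Triangle.mk f g h ∈ distTriang C) → A ∈ X → Z ∈ X → B ∈ X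

/-- `(X, Y)` is a torsion pair. -/
def TorsionPair (X Y : Set C) : Prop :=
  (∀ a ∈ X, ∀ b ∈ Y, ∀ f : a ⟶ b, f = 0) ∧
  ∀ Z : C, ∃ (A B : C) (_ : A ∈ X) (_ : B ∈ Y) (f : A ⟶ Z) (g : Z ⟶ B)
    (h : B ⟶ A⟦(1 : ℤ)⟧), Triangle.mk f g h ∈ distTriang C

set_option linter.unusedSectionVars false in
lemma wak (X : Set C) (hext : ExtensionClosed X)
    (Cobj B W : C) (w : W ⟶ Cobj) (g : Cobj ⟶ B) (h : B ⟶ W⟦(1 : ℤ)⟧)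
    (happ : IsLeftApprox X g) (hmin : ∀ e : B ⟶ B, g ≫ e = g → IsIso e)
    (hT : Triangle.mk w g h ∈ distTriang C)
    (X' : C) (hX' : X' ∈ X) (u : W ⟶ X') : u = 0 := by
  obtain ⟨hB, happ⟩ := happ
  -- φ : B ⟶ X'⟦1⟧
  set φ : B ⟶ X'⟦(1:ℤ)⟧ := h ≫ u⟦(1:ℤ)⟧' with hφdef
  obtain ⟨E, i, p, hE⟩ := distinguished_cocone_triangle₂ φ
  have hEX : E ∈ X := hext i p φ hE hX' hB
  -- g lifts through p
  have hgφ : g ≫ φ = 0 := by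
    rw [hφdef, ← assoc]
    have : g ≫ h = 0 := comp_distTriang_mor_zero₂₃ _ hT
    rw [this, zero_comp]
  obtain ⟨c, hc⟩ : ∃ c : Cobj ⟶ E, g = c ≫ p := Triangle.coyoneda_exact₃ _ hE g hgφ
  -- c factors through g
  obtain ⟨s, hs⟩ := happ E hEX c
  have : g ≫ (s ≫ p) = g := by rw [← assoc, hs, ← hc]
  have hiso : IsIso (s ≫ p) := hmin _ this
  -- φ = 0
  have hpφ : p ≫ φ = 0 := comp_distTriang_mor_zero₂₃ _ hE
  haveI := hiso
  have hφ0 : φ = 0 := by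
    have h2 : (s ≫ p) ≫ φ = (s ≫ p) ≫ 0 := by rw [assoc, hpφ, comp_zero, comp_zero]
    exact (cancel_epi (s ≫ p)).mp h2
  -- now h ≫ u⟦1⟧ = 0, use exactness on rotated triangle
  have hrot := rot_of_distTriang _ hT
  obtain ⟨v, hv⟩ : ∃ v : Cobj⟦(1:ℤ)⟧ ⟶ X'⟦(1:ℤ)⟧, u⟦(1:ℤ)⟧' = (-(w⟦(1:ℤ)⟧')) ≫ v :=
    Triangle.yoneda_exact₃ _ hrot (u⟦(1:ℤ)⟧') (by
    show h ≫ u⟦(1:ℤ)⟧' = 0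
    rw [← hφdef, hφ0])
  set v' := (shiftFunctor C (1:ℤ)).preimage v with hv'
  have : u⟦(1:ℤ)⟧' = (-(w ≫ v'))⟦(1:ℤ)⟧' := by
    rw [Functor.map_neg, Functor.map_comp, hv', Functor.map_preimage, hv,
      Preadditive.neg_comp]
  have hu : u = -(w ≫ v') := (shiftFunctor C (1:ℤ)).map_injective this
  obtain ⟨t, ht⟩ := happ X' hX' v'
  have hwg : w ≫ g = 0 := comp_distTriang_mor_zero₁₂ _ hT
  rw [hu, ← ht, ← assoc, hwg, zero_comp, neg_zero]

/-- dual Wakamatsu-type lemma: if `g : Cobj ⟶ B` is a left minimal left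
`X`-approximation and `W ⟶ Cobj ⟶ B ⟶ ΣW` is distinguished, then `Hom(W, X') = 0` for
all `X' ∈ X`; consequently, if every object admits a left minimal left `X`-approximation,
then `(^⊥X, X)` is a torsion pair. -/
theorem stmt2 (X : Set C)
    (hXiso : ∀ ⦃A B : C⦄, (A ≅ B) → A ∈ X → B ∈ X)
    (hX0 : (0 : C) ∈ X)
    (hXadd : ∀ A B : C, A ∈ X → B ∈ X → (A ⊞ B) ∈ X)
    (hext : ExtensionClosed X) :
    (∀ (Cobj B W : C) (w : W ⟶ Cobj) (g : Cobj ⟶ B) (h : B ⟶ W⟦(1 : ℤ)⟧),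
        IsLeftApprox X g → (∀ e : B ⟶ B, g ≫ e = g → IsIso e) →
        (Triangle.mk w g h ∈ distTriang C) →
        ∀ X' ∈ X, ∀ u : W ⟶ X', u = 0) ∧
    ((∀ Cobj : C, ∃ (B : C) (g : Cobj ⟶ B), IsLeftApprox X g ∧
        ∀ e : B ⟶ B, g ≫ e = g → IsIso e) →
      TorsionPair {M : C | ∀ a ∈ X, ∀ f : M ⟶ a, f = 0} X) := by
  constructor
  · exact fun Cobj B W w g h happ hmin hT X' hX' u =>
      wak X hext Cobj B W w g h happ hmin hT X' hX' u
  · intro hall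
    refine ⟨fun a ha b hb f => ha b hb f, fun Z => ?_⟩
    obtain ⟨B, g, happ, hmin⟩ := hall Z
    obtain ⟨W, w, h, hT⟩ := distinguished_cocone_triangle₁ g
    exact ⟨W, B, fun a ha f => wak X hext Z B W w g h happ hmin hT a ha f,
      happ.1, w, g, h, hT⟩
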